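/- Suppose the discount function satisfies δ(i)δ(j) ≤ δ(i+j) for all i,j ∈ ℕ. Then for any two equilibria S, T ∈ ℰ, one has J(x, ρ(x, S∩T)) ≥ max(J(x, ρ(x,S)), J(x, ρ(x,T))) for all x ∈ 𝕏; in particular, Θ(S∩T) ⊆ S∩T. -/

import Mathlib

open MeasureTheory ProbabilityTheory Set Filter Topology
open scoped ENNReal ENat Classical

noncomputable section

/-- The σ-algebra generated by the first `n+1` coordinates of the path space:
the natural filtration of the coordinate process at time `n`. -/
def pathSigma (𝕏 : Type*) [m : MeasurableSpace 𝕏] (n : ℕ) : MeasurableSpace (ℕ → 𝕏) :=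
  ⨆ i ∈ Finset.range (n + 1), MeasurableSpace.comap (fun ω : ℕ → 𝕏 => ω i) m

/-- `Pr` is the family of laws of the time-homogeneous Markov chain with one-step
transition kernel `Q`: under `Pr x` the chain starts at `x`, and the Markov property
`Pr^x(X_{n+1} ∈ A | 𝓕_n) = Q(X_n, A)` holds. -/
structure IsMarkovChainLaw {𝕏 : Type*} [MeasurableSpace 𝕏]
    (Pr : Kernel 𝕏 (ℕ → 𝕏)) (Q : Kernel 𝕏 𝕏) : Prop where
  start : ∀ x : 𝕏, Pr x {ω | ω 0 = x} = 1
  markov : ∀ (x : 𝕏) (n : ℕ) (B : Set (ℕ → 𝕏)), MeasurableSet[pathSigma 𝕏 n] B →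
    ∀ A : Set 𝕏, MeasurableSet A →
      Pr x (B ∩ {ω | ω (n + 1) ∈ A}) = ∫⁻ ω in B, Q (ω n) A ∂(Pr x)

/-- The first hitting time `ρ(x,S) = inf {t ≥ 1 : X_t ∈ S}` along the path `ω`
(equal to `⊤` if `S` is never reached at a time `≥ 1`). -/
def hitTime {𝕏 : Type*} (S : Set 𝕏) (ω : ℕ → 𝕏) : ℕ∞ :=
  sInf {n : ℕ∞ | ∃ t : ℕ, n = (t : ℕ∞) ∧ 1 ≤ t ∧ ω t ∈ S}

/-- The discounted payoff `δ(ρ(x,S)) f(X_{ρ(x,S)})` collected along the path `ω`,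
with the convention that it vanishes when `S` is never hit. -/
def stopPayoff {𝕏 : Type*} (δ : ℕ → ℝ) (f : 𝕏 → ℝ) (S : Set 𝕏) (ω : ℕ → 𝕏) : ℝ :=
  if hitTime S ω = ⊤ then 0
  else δ (hitTime S ω).toNat * f (ω (hitTime S ω).toNat)

/-- The objective value `J(x, ρ(x,S)) = 𝔼^x[δ(ρ(x,S)) f(X_{ρ(x,S)})]`. -/
def valJ {𝕏 : Type*} [MeasurableSpace 𝕏] (Pr : Kernel 𝕏 (ℕ → 𝕏)) (δ : ℕ → ℝ) (f : 𝕏 → ℝ)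
    (S : Set 𝕏) (x : 𝕏) : ℝ :=
  ∫ ω, stopPayoff δ f S ω ∂(Pr x)

/-- The operator `Θ(S) = {x ∈ 𝕏 : f(x) ≥ J(x, ρ(x,S))}`. -/
def Θ {𝕏 : Type*} [MeasurableSpace 𝕏] (Pr : Kernel 𝕏 (ℕ → 𝕏)) (δ : ℕ → ℝ) (f : 𝕏 → ℝ)
    (S : Set 𝕏) : Set 𝕏 :=
  {x | valJ Pr δ f S x ≤ f x}

/-- A Borel set `S ⊆ 𝕏` is an equilibrium if `Θ(S) = S`. -/
def IsEquilibrium {𝕏 : Type*} [MeasurableSpace 𝕏] (Pr : Kernel 𝕏 (ℕ → 𝕏)) (δ : ℕ → ℝ)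
    (f : 𝕏 → ℝ) (S : Set 𝕏) : Prop :=
  MeasurableSet S ∧ Θ Pr δ f S = S

/-- The value `V(x,S) = max (f x) (J(x, ρ(x,S)))` associated with an equilibrium `S`. -/
def valV {𝕏 : Type*} [MeasurableSpace 𝕏] (Pr : Kernel 𝕏 (ℕ → 𝕏)) (δ : ℕ → ℝ) (f : 𝕏 → ℝ)
    (S : Set 𝕏) (x : 𝕏) : ℝ :=
  max (f x) (valJ Pr δ f S x)



namespace hitAux
variable {𝕏 : Type*} {S : Set 𝕏} {ω : ℕ → 𝕏}

lemma hitTime_eq_top (h : ∀ t : ℕ, 1 ≤ t → ω t ∉ S) : hitTime S ω = ⊤ := by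
  have : {n : ℕ∞ | ∃ t : ℕ, n = (t : ℕ∞) ∧ 1 ≤ t ∧ ω t ∈ S} = ∅ := by
    ext n; simp only [mem_setOf_eq, mem_empty_iff_false, iff_false]
    rintro ⟨t, -, ht1, hts⟩; exact h t ht1 hts
  rw [hitTime, this, sInf_empty]

lemma hitTime_eq_coe {t₀ : ℕ} (h1 : 1 ≤ t₀) (hmem : ω t₀ ∈ S)
    (hmin : ∀ s : ℕ, 1 ≤ s → s < t₀ → ω s ∉ S) : hitTime S ω = (t₀ : ℕ∞) := by
  refine le_antisymm (sInf_le ⟨t₀, rfl, h1, hmem⟩) (le_sInf ?_)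
  rintro n ⟨t, rfl, ht1, hts⟩
  have : t₀ ≤ t := by
    by_contra hlt
    exact hmin t ht1 (lt_of_not_ge hlt) hts
  exact_mod_cast this

/-- Case analysis for hitTime. -/
lemma hitTime_cases (S : Set 𝕏) (ω : ℕ → 𝕏) :
    (hitTime S ω = ⊤ ∧ ∀ t : ℕ, 1 ≤ t → ω t ∉ S) ∨
    (∃ t₀ : ℕ, hitTime S ω = (t₀ : ℕ∞) ∧ 1 ≤ t₀ ∧ ω t₀ ∈ S ∧
      ∀ s : ℕ, 1 ≤ s → s < t₀ → ω s ∉ S) := by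
  by_cases h : ∃ t : ℕ, 1 ≤ t ∧ ω t ∈ S
  · right
    classical
    let t₀ := Nat.find h
    have hspec := Nat.find_spec h
    refine ⟨t₀, ?_, hspec.1, hspec.2, ?_⟩
    · exact hitTime_eq_coe hspec.1 hspec.2 (fun s hs1 hst hsS => Nat.find_min h hst ⟨hs1, hsS⟩)
    · exact fun s hs1 hst hsS => Nat.find_min h hst ⟨hs1, hsS⟩
  · left
    push_neg at h
    exact ⟨hitTime_eq_top h, h⟩

lemma hitTime_one (h : ω 1 ∈ S) : hitTime S ω = 1 := by
  have := hitTime_eq_coe (t₀ := 1) le_rfl h (fun s hs1 hst => by omega)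
  simpa using this

lemma hitTime_shift (h : ω 1 ∉ S) :
    hitTime S ω = hitTime S (fun n => ω (n + 1)) + 1 := by
  rcases hitTime_cases S (fun n => ω (n + 1)) with ⟨htop, hnone⟩ | ⟨t₀, heq, ht1, htS, hmin⟩
  · rw [htop]
    have : ∀ t : ℕ, 1 ≤ t → ω t ∉ S := by
      intro t ht1 htS
      rcases Nat.lt_or_ge t 2 with h2 | h2
      · interval_cases t
        · exact h htS
      · exact hnone (t - 1) (by omega) (by simpa [Nat.sub_add_cancel (by omega : 1 ≤ t)] using htS)
    rw [hitTime_eq_top this]; rfl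
  · rw [heq]
    have : hitTime S ω = ((t₀ + 1 : ℕ) : ℕ∞) := by
      refine hitTime_eq_coe (by omega) (by simpa using htS) ?_
      intro s hs1 hst hsS
      rcases Nat.lt_or_ge s 2 with h2 | h2
      · interval_cases s
        · exact h hsS
      · exact hmin (s - 1) (by omega) (by omega)
          (by simpa [Nat.sub_add_cancel (by omega : 1 ≤ s)] using hsS)
    rw [this]
    push_cast
    rfl

end hitAux

namespace hitAux
variable {𝕏 : Type*} {S : Set 𝕏} {ω : ℕ → 𝕏}

/-- shifted-discount payoff -/
def pay (δ : ℕ → ℝ) (f : 𝕏 → ℝ) (W : Set 𝕏) (k : ℕ) (ω : ℕ → 𝕏) : ℝ :=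
  if hitTime W ω = ⊤ then 0
  else δ (k + (hitTime W ω).toNat) * f (ω (hitTime W ω).toNat)

variable {δ : ℕ → ℝ} {f : 𝕏 → ℝ} {W : Set 𝕏}

lemma pay_eq_of_top (k : ℕ) (h : hitTime W ω = ⊤) : pay δ f W k ω = 0 := by
  simp [pay, h]

lemma pay_eq_of_coe {t₀ : ℕ} (k : ℕ) (h : hitTime W ω = (t₀ : ℕ∞)) :
    pay δ f W k ω = δ (k + t₀) * f (ω t₀) := by
  have hne : hitTime W ω ≠ ⊤ := by simp [h]
  rw [pay, if_neg hne, h, ENat.toNat_coe]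

lemma pay_zero (δ : ℕ → ℝ) (f : 𝕏 → ℝ) (W : Set 𝕏) (ω : ℕ → 𝕏) :
    pay δ f W 0 ω = (if hitTime W ω = ⊤ then 0
      else δ (hitTime W ω).toNat * f (ω (hitTime W ω).toNat)) := by
  simp [pay]

lemma pay_nonneg (hδ : ∀ k, 0 ≤ δ k) (hf : ∀ x, 0 ≤ f x) (k : ℕ) (ω : ℕ → 𝕏) :
    0 ≤ pay δ f W k ω := by
  unfold pay; split
  · exact le_rfl
  · exact mul_nonneg (hδ _) (hf _)

lemma pay_le {C : ℝ} (hδ : ∀ k, 0 ≤ δ k) (hC : 0 ≤ C)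
    (hf : ∀ x, 0 ≤ f x) (hfC : ∀ x, f x ≤ C) (hanti : Antitone δ) (k : ℕ) (ω : ℕ → 𝕏) :
    pay δ f W k ω ≤ C * δ (k + 1) := by
  rcases hitTime_cases W ω with ⟨htop, -⟩ | ⟨t₀, heq, ht1, -, -⟩
  · rw [pay_eq_of_top k htop]
    exact mul_nonneg hC (hδ _)
  · rw [pay_eq_of_coe k heq]
    calc δ (k + t₀) * f (ω t₀) ≤ δ (k + 1) * C :=
          mul_le_mul (hanti (by omega)) (hfC _) (hf _) (hδ _)
      _ = C * δ (k + 1) := mul_comm _ _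

lemma pay_rec (δ : ℕ → ℝ) (f : 𝕏 → ℝ) (W : Set 𝕏) (k : ℕ) (ω : ℕ → 𝕏) :
    pay δ f W k ω = if ω 1 ∈ W then δ (k + 1) * f (ω 1)
      else pay δ f W (k + 1) (fun n => ω (n + 1)) := by
  by_cases h1 : ω 1 ∈ W
  · rw [if_pos h1, pay_eq_of_coe k (by exact_mod_cast hitTime_one h1)]
  · rw [if_neg h1]
    have hsh := hitTime_shift h1
    rcases hitTime_cases W (fun n => ω (n + 1)) with ⟨htop, -⟩ | ⟨t₀, heq, ht1, -, -⟩
    · have : hitTime W ω = ⊤ := by rw [hsh, htop]; rfl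
      rw [pay_eq_of_top k this, pay_eq_of_top _ htop]
    · have hω : hitTime W ω = ((t₀ + 1 : ℕ) : ℕ∞) := by rw [hsh, heq]; push_cast; rfl
      rw [pay_eq_of_coe k hω, pay_eq_of_coe _ heq]
      have : k + (t₀ + 1) = k + 1 + t₀ := by omega
      rw [this]

/-- DI comparison pathwise -/
lemma pay_DI (hδ : ∀ k, 0 ≤ δ k) (hf : ∀ x, 0 ≤ f x)
    (hDI : ∀ i j : ℕ, δ i * δ j ≤ δ (i + j)) (k : ℕ) (ω : ℕ → 𝕏) :
    δ k * pay δ f W 0 ω ≤ pay δ f W k ω := by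
  rcases hitTime_cases W ω with ⟨htop, -⟩ | ⟨t₀, heq, -, -, -⟩
  · rw [pay_eq_of_top 0 htop, pay_eq_of_top k htop, mul_zero]
  · rw [pay_eq_of_coe 0 heq, pay_eq_of_coe k heq, Nat.zero_add, ← mul_assoc]
    exact mul_le_mul_of_nonneg_right (hDI k t₀) (hf _)

lemma measurable_hit_coe [MeasurableSpace 𝕏] (hW : MeasurableSet W) (t : ℕ) :
    MeasurableSet {ω : ℕ → 𝕏 | hitTime W ω = (t : ℕ∞)} := by
  rcases Nat.eq_zero_or_pos t with rfl | ht
  · have : {ω : ℕ → 𝕏 | hitTime W ω = ((0:ℕ) : ℕ∞)} = ∅ := by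
      ext ω; simp only [mem_setOf_eq, mem_empty_iff_false, iff_false]
      intro h
      rcases hitTime_cases W ω with ⟨htop, -⟩ | ⟨t₀, heq, ht1, -, -⟩
      · rw [htop] at h; exact (ENat.top_ne_coe (0:ℕ)) h
      · rw [heq] at h
        have : t₀ = 0 := by exact_mod_cast h
        omega
    rw [this]; exact MeasurableSet.empty
  · have : {ω : ℕ → 𝕏 | hitTime W ω = (t : ℕ∞)} =
        (fun ω : ℕ → 𝕏 => ω t) ⁻¹' W ∩
          ⋂ (s : ℕ) (_ : 1 ≤ s) (_ : s < t), (fun ω : ℕ → 𝕏 => ω s) ⁻¹' Wᶜ := by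
      ext ω
      simp only [mem_setOf_eq, mem_inter_iff, mem_preimage, mem_iInter, mem_compl_iff]
      constructor
      · intro h
        rcases hitTime_cases W ω with ⟨htop, -⟩ | ⟨t₀, heq, ht1, htS, hmin⟩
        · rw [htop] at h; exact absurd h (ENat.top_ne_coe t)
        · rw [heq] at h
          have : t₀ = t := by exact_mod_cast h
          subst this
          exact ⟨htS, hmin⟩
      · rintro ⟨htS, hmin⟩
        exact hitTime_eq_coe ht htS hmin
    rw [this]
    exact ((measurable_pi_apply t) hW).inter
      (MeasurableSet.iInter fun s => MeasurableSet.iInter fun _ => MeasurableSet.iInter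
        fun _ => (measurable_pi_apply s) hW.compl)

lemma measurable_hit_top [MeasurableSpace 𝕏] (hW : MeasurableSet W) :
    MeasurableSet {ω : ℕ → 𝕏 | hitTime W ω = ⊤} := by
  have : {ω : ℕ → 𝕏 | hitTime W ω = ⊤} =
      ⋂ (t : ℕ) (_ : 1 ≤ t), (fun ω : ℕ → 𝕏 => ω t) ⁻¹' Wᶜ := by
    ext ω
    simp only [mem_setOf_eq, mem_iInter, mem_preimage, mem_compl_iff]
    constructor
    · intro h
      rcases hitTime_cases W ω with ⟨-, hnone⟩ | ⟨t₀, heq, -, -, -⟩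
      · exact hnone
      · rw [heq] at h; exact absurd h (ENat.coe_ne_top _)
    · intro h; exact hitTime_eq_top h
  rw [this]
  exact MeasurableSet.iInter fun t => MeasurableSet.iInter fun _ =>
    (measurable_pi_apply t) hW.compl

lemma measurable_pay [MeasurableSpace 𝕏] (hW : MeasurableSet W) (hf : Measurable f) (k : ℕ) :
    Measurable (pay δ f W k) := by
  intro E hE
  have : pay δ f W k ⁻¹' E =
      ({ω : ℕ → 𝕏 | hitTime W ω = ⊤} ∩ (if (0:ℝ) ∈ E then univ else ∅)) ∪
      ⋃ t : ℕ, ({ω : ℕ → 𝕏 | hitTime W ω = (t : ℕ∞)} ∩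
        (fun ω : ℕ → 𝕏 => δ (k + t) * f (ω t)) ⁻¹' E) := by
    ext ω
    simp only [mem_preimage, mem_union, mem_inter_iff, mem_setOf_eq, mem_iUnion]
    rcases hitTime_cases W ω with ⟨htop2, -⟩ | ⟨t₀, heq, -, -, -⟩
    · rw [pay_eq_of_top k htop2]
      constructor
      · intro h0
        left; refine ⟨htop2, ?_⟩; rw [if_pos h0]; trivial
      · rintro (⟨-, hmem⟩ | ⟨t, ht, -⟩)
        · by_cases h0 : (0:ℝ) ∈ E
          · exact h0
          · rw [if_neg h0] at hmem; exact absurd hmem (notMem_empty ω)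
        · rw [ht] at htop2; exact absurd htop2 (ENat.coe_ne_top _)
    · rw [pay_eq_of_coe k heq]
      constructor
      · intro h; right; exact ⟨t₀, heq, h⟩
      · rintro (⟨h, -⟩ | ⟨t, ht, hmem⟩)
        · rw [heq] at h; exact absurd h (ENat.coe_ne_top _)
        · rw [heq] at ht
          have : t = t₀ := by exact_mod_cast ht.symm
          subst this; exact hmem
  rw [this]
  refine MeasurableSet.union ((measurable_hit_top hW).inter (by split <;> simp))
    (MeasurableSet.iUnion fun t => (measurable_hit_coe hW t).inter ?_)
  exact (measurable_const.mul (hf.comp (measurable_pi_apply t))) hE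

end hitAux

namespace hitAux
variable {𝕏 : Type*} [MeasurableSpace 𝕏]

lemma pathSigma_le (n : ℕ) : pathSigma 𝕏 n ≤ MeasurableSpace.pi := by
  refine iSup_le fun i => iSup_le fun _ => ?_
  exact MeasurableSpace.comap_le_iff_le_map.mpr fun s hs => (measurable_pi_apply i) hs

lemma eval_mem_pathSigma {n i : ℕ} (hi : i ≤ n) {A : Set 𝕏} (hA : MeasurableSet A) :
    MeasurableSet[pathSigma 𝕏 n] ((fun ω : ℕ → 𝕏 => ω i) ⁻¹' A) := by
  have h1 : MeasurableSpace.comap (fun ω : ℕ → 𝕏 => ω i) ‹MeasurableSpace 𝕏› ≤ pathSigma 𝕏 n :=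
    le_iSup₂ (f := fun (i : ℕ) (_ : i ∈ Finset.range (n+1)) =>
      MeasurableSpace.comap (fun ω : ℕ → 𝕏 => ω i) ‹MeasurableSpace 𝕏›) i
      (Finset.mem_range.mpr (by omega))
  exact h1 _ ⟨A, hA, rfl⟩

lemma box_mem_pathSigma {n : ℕ} {A : ℕ → Set 𝕏} (hA : ∀ i, MeasurableSet (A i)) :
    MeasurableSet[pathSigma 𝕏 n] {ω : ℕ → 𝕏 | ∀ i ≤ n, ω i ∈ A i} := by
  have : {ω : ℕ → 𝕏 | ∀ i ≤ n, ω i ∈ A i} =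
      ⋂ (i : ℕ) (_ : i ≤ n), (fun ω : ℕ → 𝕏 => ω i) ⁻¹' A i := by
    ext ω; simp [mem_iInter]
  rw [this]
  exact MeasurableSet.iInter fun i => MeasurableSet.iInter fun hi =>
    eval_mem_pathSigma hi (hA i)

lemma shiftBox_mem_pathSigma {n : ℕ} {A : ℕ → Set 𝕏} (hA : ∀ i, MeasurableSet (A i)) :
    MeasurableSet[pathSigma 𝕏 (n + 1)] {ω : ℕ → 𝕏 | ∀ i ≤ n, ω (i + 1) ∈ A i} := by
  have : {ω : ℕ → 𝕏 | ∀ i ≤ n, ω (i+1) ∈ A i} =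
      ⋂ (i : ℕ) (_ : i ≤ n), (fun ω : ℕ → 𝕏 => ω (i+1)) ⁻¹' A i := by
    ext ω; simp [mem_iInter]
  rw [this]
  exact MeasurableSet.iInter fun i => MeasurableSet.iInter fun hi =>
    eval_mem_pathSigma (by omega) (hA i)

/-- boxes: the generating π-system. -/
def boxes (𝕏 : Type*) [MeasurableSpace 𝕏] : Set (Set (ℕ → 𝕏)) :=
  {C | ∃ (n : ℕ) (A : ℕ → Set 𝕏), (∀ i, MeasurableSet (A i)) ∧
    C = {ω : ℕ → 𝕏 | ∀ i ≤ n, ω i ∈ A i}}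

lemma isPiSystem_boxes : IsPiSystem (boxes 𝕏) := by
  rintro C1 ⟨n1, A1, hA1, rfl⟩ C2 ⟨n2, A2, hA2, rfl⟩ -
  refine ⟨max n1 n2, fun i => (if i ≤ n1 then A1 i else univ) ∩ (if i ≤ n2 then A2 i else univ),
    fun i => MeasurableSet.inter (by split <;> first | exact hA1 i | exact MeasurableSet.univ)
      (by split <;> first | exact hA2 i | exact MeasurableSet.univ), ?_⟩
  ext ω
  simp only [mem_inter_iff, mem_setOf_eq]
  constructor
  · rintro ⟨h1, h2⟩ i hi
    constructor
    · split
      · exact h1 i ‹_›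
      · trivial
    · split
      · exact h2 i ‹_›
      · trivial
  · intro h
    constructor
    · intro i hi
      have := (h i (le_trans hi (le_max_left _ _))).1
      rwa [if_pos hi] at this
    · intro i hi
      have := (h i (le_trans hi (le_max_right _ _))).2
      rwa [if_pos hi] at this

lemma generateFrom_boxes :
    (MeasurableSpace.pi : MeasurableSpace (ℕ → 𝕏)) = .generateFrom (boxes 𝕏) := by
  refine le_antisymm ?_ (MeasurableSpace.generateFrom_le ?_)
  · refine iSup_le fun i => MeasurableSpace.comap_le_iff_le_map.mpr fun s hs => ?_
    refine MeasurableSpace.measurableSet_generateFrom ⟨i, fun j => if j = i then s else univ,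
      fun j => (by by_cases h : j = i <;> simp [h, hs]), ?_⟩
    ext ω
    simp only [MeasurableSpace.map_def, mem_preimage, mem_setOf_eq]
    constructor
    · intro h j hj
      split
      · subst ‹j = i›; exact h
      · trivial
    · intro h
      have := h i le_rfl
      rwa [if_pos rfl] at this
  · rintro C ⟨n, A, hA, rfl⟩
    exact (pathSigma_le n) _ (box_mem_pathSigma hA)

variable (Pr : Kernel 𝕏 (ℕ → 𝕏)) [IsMarkovKernel Pr] (Q : Kernel 𝕏 𝕏) [IsMarkovKernel Q]
  (hchain : IsMarkovChainLaw Pr Q)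

/-- lintegral form of the one-step Markov property. -/
lemma markov' (hchain : IsMarkovChainLaw Pr Q) (x : 𝕏) (n : ℕ) (B : Set (ℕ → 𝕏)) (hB : MeasurableSet[pathSigma 𝕏 n] B)
    (g : 𝕏 → ℝ≥0∞) (hg : Measurable g) :
    ∫⁻ ω in B, g (ω (n + 1)) ∂(Pr x) = ∫⁻ ω in B, ∫⁻ z, g z ∂(Q (ω n)) ∂(Pr x) := by
  have hB' : MeasurableSet B := pathSigma_le n _ hB
  set μB := (Pr x).restrict B with hμB
  have hmap : μB.map (fun ω => ω (n + 1)) = (μB.map (fun ω => ω n)).bind Q := by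
    ext E hE
    rw [Measure.map_apply (measurable_pi_apply _) hE,
      Measure.bind_apply hE (Q.measurable.aemeasurable),
      lintegral_map (Q.measurable_coe hE) (measurable_pi_apply n)]
    rw [hμB, Measure.restrict_apply (measurable_pi_apply (n+1) hE)]
    rw [inter_comm]
    exact hchain.markov x n B hB E hE
  calc ∫⁻ ω in B, g (ω (n + 1)) ∂(Pr x)
      = ∫⁻ z, g z ∂(μB.map (fun ω => ω (n + 1))) :=
        (lintegral_map hg (measurable_pi_apply _)).symm
    _ = ∫⁻ z, g z ∂((μB.map (fun ω => ω n)).bind Q) := by rw [hmap]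
    _ = ∫⁻ y, ∫⁻ z, g z ∂(Q y) ∂(μB.map (fun ω => ω n)) :=
        Measure.lintegral_bind (Q.measurable.aemeasurable) hg.aemeasurable
    _ = ∫⁻ ω in B, ∫⁻ z, g z ∂(Q (ω n)) ∂(Pr x) := by
        rw [lintegral_map ?_ (measurable_pi_apply n)]
        exact Measurable.lintegral_kernel hg


lemma ae_start (hchain : IsMarkovChainLaw Pr Q) [MeasurableSingletonClass 𝕏] (x : 𝕏) :
    ∀ᵐ ω ∂(Pr x), ω 0 = x := by
  have hms : MeasurableSet {ω : ℕ → 𝕏 | ω 0 = x} := by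
    have : {ω : ℕ → 𝕏 | ω 0 = x} = (fun ω : ℕ → 𝕏 => ω 0) ⁻¹' {x} := by
      ext ω; simp
    rw [this]
    exact (measurable_pi_apply 0) (measurableSet_singleton x)
  rw [ae_iff]
  have h1 : {ω : ℕ → 𝕏 | ¬ ω 0 = x} = {ω : ℕ → 𝕏 | ω 0 = x}ᶜ := rfl
  rw [h1, measure_compl hms (measure_ne_top _ _), hchain.start x, measure_univ]
  simp

/-- the key induction: conditioning on the first step. -/
lemma step_induction (hchain : IsMarkovChainLaw Pr Q) [MeasurableSingletonClass 𝕏] (n : ℕ) :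
    ∀ (A : ℕ → Set 𝕏), (∀ i, MeasurableSet (A i)) → ∀ (g : 𝕏 → ℝ≥0∞), Measurable g → ∀ x : 𝕏,
    ∫⁻ ω in {ω : ℕ → 𝕏 | ∀ i ≤ n, ω (i+1) ∈ A i}, g (ω (n+1)) ∂(Pr x)
      = ∫⁻ y, ∫⁻ ω in {ω : ℕ → 𝕏 | ∀ i ≤ n, ω i ∈ A i}, g (ω n) ∂(Pr y) ∂(Q x) := by
  induction n with
  | zero =>
    intro A hA g hg x
    have hbox : {ω : ℕ → 𝕏 | ∀ i ≤ 0, ω (i+1) ∈ A i} = (fun ω : ℕ → 𝕏 => ω 1) ⁻¹' (A 0) := by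
      ext ω; simp [Nat.le_zero]
    have hbox2 : {ω : ℕ → 𝕏 | ∀ i ≤ 0, ω i ∈ A i} = (fun ω : ℕ → 𝕏 => ω 0) ⁻¹' (A 0) := by
      ext ω; simp [Nat.le_zero]
    set G : 𝕏 → ℝ≥0∞ := (A 0).indicator g with hG
    have hGm : Measurable G := hg.indicator (hA 0)
    have hcomp : ∀ ω : ℕ → 𝕏, ((fun ω : ℕ → 𝕏 => ω 1) ⁻¹' (A 0)).indicator
        (fun ω : ℕ → 𝕏 => g (ω 1)) ω = G (ω 1) := by
      intro ω
      by_cases h : ω 1 ∈ A 0 <;> simp [hG, indicator, h]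
    have lhs : ∫⁻ ω in {ω : ℕ → 𝕏 | ∀ i ≤ 0, ω (i+1) ∈ A i}, g (ω 1) ∂(Pr x)
        = ∫⁻ z, G z ∂(Q x) := by
      rw [hbox, ← lintegral_indicator ((measurable_pi_apply 1) (hA 0))]
      calc ∫⁻ ω, ((fun ω : ℕ → 𝕏 => ω 1) ⁻¹' (A 0)).indicator (fun ω => g (ω 1)) ω ∂(Pr x)
          = ∫⁻ ω, G (ω (0+1)) ∂(Pr x) := by
            refine lintegral_congr fun ω => ?_
            exact hcomp ω
        _ = ∫⁻ ω in (univ : Set (ℕ → 𝕏)), G (ω (0+1)) ∂(Pr x) := by rw [Measure.restrict_univ]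
        _ = ∫⁻ ω in (univ : Set (ℕ → 𝕏)), ∫⁻ z, G z ∂(Q (ω 0)) ∂(Pr x) :=
            markov' Pr Q hchain x 0 univ MeasurableSet.univ G hGm
        _ = ∫⁻ ω, ∫⁻ z, G z ∂(Q (ω 0)) ∂(Pr x) := by rw [Measure.restrict_univ]
        _ = ∫⁻ ω, (fun _ : ℕ → 𝕏 => ∫⁻ z, G z ∂(Q x)) ω ∂(Pr x) := by
            refine lintegral_congr_ae ?_
            filter_upwards [ae_start Pr Q hchain x] with ω h0
            rw [h0]
        _ = ∫⁻ z, G z ∂(Q x) := by rw [lintegral_const, measure_univ, mul_one]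
    rw [lhs, hbox2]
    refine lintegral_congr fun y => ?_
    show G y = ∫⁻ ω in (fun ω : ℕ → 𝕏 => ω 0) ⁻¹' (A 0), g (ω 0) ∂(Pr y)
    rw [← lintegral_indicator ((measurable_pi_apply 0) (hA 0))]
    have hcomp2 : ∀ ω : ℕ → 𝕏, ((fun ω : ℕ → 𝕏 => ω 0) ⁻¹' (A 0)).indicator
        (fun ω : ℕ → 𝕏 => g (ω 0)) ω = G (ω 0) := by
      intro ω
      by_cases h : ω 0 ∈ A 0 <;> simp [hG, indicator, h]
    calc G y = ∫⁻ ω, (fun _ : ℕ → 𝕏 => G y) ω ∂(Pr y) := by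
          rw [lintegral_const, measure_univ, mul_one]
      _ = ∫⁻ ω, ((fun ω : ℕ → 𝕏 => ω 0) ⁻¹' (A 0)).indicator (fun ω => g (ω 0)) ω ∂(Pr y) := by
          refine lintegral_congr_ae ?_
          filter_upwards [ae_start Pr Q hchain y] with ω h0
          rw [hcomp2 ω, h0]
  | succ n ih =>
    intro A hA g hg x
    set Bs := {ω : ℕ → 𝕏 | ∀ i ≤ n, ω (i+1) ∈ A i} with hBs
    set Bb := {ω : ℕ → 𝕏 | ∀ i ≤ n, ω i ∈ A i} with hBb
    have hBsm : MeasurableSet[pathSigma 𝕏 (n+1)] Bs := shiftBox_mem_pathSigma hA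
    have hBbm : MeasurableSet[pathSigma 𝕏 n] Bb := box_mem_pathSigma hA
    have hBsm' : MeasurableSet Bs := pathSigma_le (n+1) _ hBsm
    have hBbm' : MeasurableSet Bb := pathSigma_le n _ hBbm
    set G : 𝕏 → ℝ≥0∞ := (A (n+1)).indicator g with hG
    have hGm : Measurable G := hg.indicator (hA (n+1))
    set h : 𝕏 → ℝ≥0∞ := fun z => ∫⁻ w, G w ∂(Q z) with hh
    have hhm : Measurable h := Measurable.lintegral_kernel hGm
    -- decompose the constraint sets
    have hsplit : {ω : ℕ → 𝕏 | ∀ i ≤ n+1, ω (i+1) ∈ A i}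
        = Bs ∩ (fun ω : ℕ → 𝕏 => ω (n+2)) ⁻¹' (A (n+1)) := by
      ext ω
      simp only [hBs, mem_setOf_eq, mem_inter_iff, mem_preimage]
      constructor
      · intro hcon
        exact ⟨fun i hi => hcon i (by omega), hcon (n+1) le_rfl⟩
      · rintro ⟨h1, h2⟩ i hi
        rcases Nat.lt_or_ge i (n+1) with hlt | hge
        · exact h1 i (by omega)
        · have : i = n+1 := by omega
          subst this; exact h2
    have hsplit2 : {ω : ℕ → 𝕏 | ∀ i ≤ n+1, ω i ∈ A i}
        = Bb ∩ (fun ω : ℕ → 𝕏 => ω (n+1)) ⁻¹' (A (n+1)) := by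
      ext ω
      simp only [hBb, mem_setOf_eq, mem_inter_iff, mem_preimage]
      constructor
      · intro hcon
        exact ⟨fun i hi => hcon i (by omega), hcon (n+1) le_rfl⟩
      · rintro ⟨h1, h2⟩ i hi
        rcases Nat.lt_or_ge i (n+1) with hlt | hge
        · exact h1 i (by omega)
        · have : i = n+1 := by omega
          subst this; exact h2
    have key1 : ∀ (μ : Measure (ℕ → 𝕏)) (B : Set (ℕ → 𝕏)) (m : ℕ), MeasurableSet B →
        ∫⁻ ω in B ∩ (fun ω : ℕ → 𝕏 => ω (m+1)) ⁻¹' (A (n+1)), g (ω (m+1)) ∂μ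
          = ∫⁻ ω in B, G (ω (m+1)) ∂μ := by
      intro μ B m hB
      rw [inter_comm, ← Measure.restrict_restrict ((measurable_pi_apply (m+1)) (hA (n+1))),
        ← lintegral_indicator ((measurable_pi_apply (m+1)) (hA (n+1)))]
      exact lintegral_congr fun ω => by
        by_cases hmem : ω (m+1) ∈ A (n+1) <;> simp [hG, indicator, hmem]
    calc ∫⁻ ω in {ω : ℕ → 𝕏 | ∀ i ≤ n+1, ω (i+1) ∈ A i}, g (ω (n+2)) ∂(Pr x)
        = ∫⁻ ω in Bs, G (ω (n+2)) ∂(Pr x) := by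
          rw [hsplit]
          exact key1 (Pr x) Bs (n+1) hBsm'
      _ = ∫⁻ ω in Bs, h (ω (n+1)) ∂(Pr x) :=
          markov' Pr Q hchain x (n+1) Bs hBsm G hGm
      _ = ∫⁻ y, ∫⁻ ω in Bb, h (ω n) ∂(Pr y) ∂(Q x) := ih A hA h hhm x
      _ = ∫⁻ y, ∫⁻ ω in Bb, G (ω (n+1)) ∂(Pr y) ∂(Q x) := by
          refine lintegral_congr fun y => ?_
          exact (markov' Pr Q hchain y n Bb hBbm G hGm).symm
      _ = ∫⁻ y, ∫⁻ ω in {ω : ℕ → 𝕏 | ∀ i ≤ n+1, ω i ∈ A i}, g (ω (n+1)) ∂(Pr y) ∂(Q x) := by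
          refine lintegral_congr fun y => ?_
          rw [hsplit2]
          exact (key1 (Pr y) Bb n hBbm').symm


/-- the Markov property for the one-step shift of the whole path. -/
lemma shiftMarkov (hchain : IsMarkovChainLaw Pr Q) [MeasurableSingletonClass 𝕏] (x : 𝕏) :
    (Pr x).map (fun ω n => ω (n + 1)) = (Q x).bind (fun y => Pr y) := by
  have hshift : Measurable (fun (ω : ℕ → 𝕏) (n : ℕ) => ω (n + 1)) :=
    measurable_pi_lambda _ fun n => measurable_pi_apply (n + 1)
  refine ext_of_generate_finite (boxes 𝕏) generateFrom_boxes isPiSystem_boxes ?_ ?_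
  · rintro C ⟨n, A, hA, rfl⟩
    have hCm : MeasurableSet {ω : ℕ → 𝕏 | ∀ i ≤ n, ω i ∈ A i} :=
      pathSigma_le n _ (box_mem_pathSigma hA)
    rw [Measure.map_apply hshift hCm, Measure.bind_apply hCm (Pr.measurable.aemeasurable)]
    have hpre : (fun (ω : ℕ → 𝕏) (n : ℕ) => ω (n + 1)) ⁻¹' {ω : ℕ → 𝕏 | ∀ i ≤ n, ω i ∈ A i}
        = {ω : ℕ → 𝕏 | ∀ i ≤ n, ω (i + 1) ∈ A i} := by
      ext ω; simp [mem_preimage]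
    rw [hpre]
    have := step_induction Pr Q hchain n A hA (fun _ => (1:ℝ≥0∞)) measurable_const x
    simp only [setLIntegral_one] at this
    rw [this]
  · rw [Measure.map_apply hshift MeasurableSet.univ, preimage_univ,
      Measure.bind_apply MeasurableSet.univ (Pr.measurable.aemeasurable)]
    simp [measure_univ]

lemma shiftMarkov_lintegral (hchain : IsMarkovChainLaw Pr Q) [MeasurableSingletonClass 𝕏]
    (x : 𝕏) (g : (ℕ → 𝕏) → ℝ≥0∞) (hg : Measurable g) :
    ∫⁻ ω, g (fun n => ω (n + 1)) ∂(Pr x) = ∫⁻ y, ∫⁻ η, g η ∂(Pr y) ∂(Q x) := by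
  have hshift : Measurable (fun (ω : ℕ → 𝕏) (n : ℕ) => ω (n + 1)) :=
    measurable_pi_lambda _ fun n => measurable_pi_apply (n + 1)
  rw [← lintegral_map hg hshift, shiftMarkov Pr Q hchain x,
    Measure.lintegral_bind (Pr.measurable.aemeasurable) hg.aemeasurable]

/-- Bochner version for nonnegative bounded measurable `g`. -/
lemma shiftMarkov_integral (hchain : IsMarkovChainLaw Pr Q) [MeasurableSingletonClass 𝕏]
    (x : 𝕏) (g : (ℕ → 𝕏) → ℝ) (hg : Measurable g) (hg0 : ∀ ω, 0 ≤ g ω)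
    {C : ℝ} (hgC : ∀ ω, g ω ≤ C) :
    ∫ ω, g (fun n => ω (n + 1)) ∂(Pr x) = ∫ y, (∫ η, g η ∂(Pr y)) ∂(Q x) := by
  have hge : Measurable fun ω => ENNReal.ofReal (g ω) := hg.ennreal_ofReal
  have hC0 : 0 ≤ C := le_trans (hg0 (fun _ => x)) (hgC _)
  have hlhs : ∫ ω, g (fun n => ω (n + 1)) ∂(Pr x)
      = (∫⁻ ω, ENNReal.ofReal (g (fun n => ω (n + 1))) ∂(Pr x)).toReal := by
    refine integral_eq_lintegral_of_nonneg_ae (ae_of_all _ fun ω => hg0 _) ?_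
    exact (hg.comp (measurable_pi_lambda _ fun n => measurable_pi_apply (n + 1))).aestronglyMeasurable
  have hinner : ∀ y : 𝕏, ∫ η, g η ∂(Pr y) = (∫⁻ η, ENNReal.ofReal (g η) ∂(Pr y)).toReal :=
    fun y => integral_eq_lintegral_of_nonneg_ae (ae_of_all _ hg0) hg.aestronglyMeasurable
  have hGm : Measurable fun y => ∫⁻ η, ENNReal.ofReal (g η) ∂(Pr y) :=
    Measurable.lintegral_kernel hge
  have hGlt : ∀ᵐ y ∂(Q x), (∫⁻ η, ENNReal.ofReal (g η) ∂(Pr y)) < ⊤ := by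
    refine ae_of_all _ fun y => ?_
    calc ∫⁻ η, ENNReal.ofReal (g η) ∂(Pr y) ≤ ∫⁻ _, ENNReal.ofReal C ∂(Pr y) :=
          lintegral_mono fun η => ENNReal.ofReal_le_ofReal (hgC η)
      _ = ENNReal.ofReal C := by rw [lintegral_const, measure_univ, mul_one]
      _ < ⊤ := ENNReal.ofReal_lt_top
  rw [hlhs]
  have : ∫ y, (∫ η, g η ∂(Pr y)) ∂(Q x)
      = ∫ y, (∫⁻ η, ENNReal.ofReal (g η) ∂(Pr y)).toReal ∂(Q x) := by
    exact integral_congr_ae (ae_of_all _ fun y => hinner y)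
  rw [this, integral_toReal hGm.aemeasurable hGlt]
  congr 1
  have : (fun ω : ℕ → 𝕏 => ENNReal.ofReal (g (fun n => ω (n + 1))))
      = fun ω : ℕ → 𝕏 => (fun η => ENNReal.ofReal (g η)) (fun n => ω (n + 1)) := rfl
  rw [this]
  exact shiftMarkov_lintegral Pr Q hchain x _ hge

end hitAux

namespace hitAux

section FK
variable {𝕏 : Type*} [MeasurableSpace 𝕏] [MeasurableSingletonClass 𝕏]
  (Pr : Kernel 𝕏 (ℕ → 𝕏)) [IsMarkovKernel Pr] (Q : Kernel 𝕏 𝕏) [IsMarkovKernel Q]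
  (δ : ℕ → ℝ) (f : 𝕏 → ℝ)

lemma integrable_of_bounds {α : Type*} [MeasurableSpace α] (μ : Measure α)
    [IsProbabilityMeasure μ] {g : α → ℝ} (hm : Measurable g) {C : ℝ}
    (h0 : ∀ a, 0 ≤ g a) (hC : ∀ a, g a ≤ C) : Integrable g μ := by
  refine Integrable.mono' (integrable_const C) hm.aestronglyMeasurable (ae_of_all _ fun a => ?_)
  rw [Real.norm_eq_abs, abs_of_nonneg (h0 a)]; exact hC a

def Fk (W : Set 𝕏) (k : ℕ) (x : 𝕏) : ℝ := ∫ ω, pay δ f W k ω ∂(Pr x)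

variable {C : ℝ} {W : Set 𝕏}
variable (hδ0 : ∀ k, 0 ≤ δ k) (hanti : Antitone δ) (hC : 0 ≤ C) (hδ1 : ∀ k, δ k ≤ 1)
  (hf0 : ∀ x, 0 ≤ f x) (hfC : ∀ x, f x ≤ C) (hfm : Measurable f) (hW : MeasurableSet W)

include hδ0 hf0 in
lemma Fk_nonneg (k : ℕ) (x : 𝕏) : 0 ≤ Fk Pr δ f W k x :=
  integral_nonneg fun ω => pay_nonneg hδ0 hf0 k ω

include hδ0 hanti hC hf0 hfC hfm hW in
lemma Fk_le (k : ℕ) (x : 𝕏) : Fk Pr δ f W k x ≤ C * δ (k + 1) := by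
  refine le_trans (integral_mono (integrable_of_bounds _ (measurable_pay hW hfm k)
    (pay_nonneg hδ0 hf0 k) (pay_le hδ0 hC hf0 hfC hanti k)) (integrable_const _)
    (pay_le hδ0 hC hf0 hfC hanti k)) ?_
  rw [integral_const]
  simp

include hδ0 hanti hC hδ1 hf0 hfC hfm hW in
lemma measurable_Fk (k : ℕ) : Measurable (Fk Pr δ f W k) := by
  have : Fk Pr δ f W k = fun y => (∫⁻ ω, ENNReal.ofReal (pay δ f W k ω) ∂(Pr y)).toReal := by
    funext y
    exact integral_eq_lintegral_of_nonneg_ae (ae_of_all _ fun ω => pay_nonneg hδ0 hf0 k ω)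
      (measurable_pay hW hfm k).aestronglyMeasurable
  rw [this]
  exact (Measurable.lintegral_kernel (measurable_pay hW hfm k).ennreal_ofReal).ennreal_toReal

include hδ0 hanti hC hδ1 hf0 hfC hfm hW in
lemma Fk_rec (hchain : IsMarkovChainLaw Pr Q) (k : ℕ) (x : 𝕏) :
    Fk Pr δ f W k x
      = ∫ y, (if y ∈ W then δ (k+1) * f y else Fk Pr δ f W (k+1) y) ∂(Q x) := by
  set g : (ℕ → 𝕏) → ℝ := fun η => if η 0 ∈ W then δ (k+1) * f (η 0) else pay δ f W (k+1) η
    with hg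
  have hgm : Measurable g := by
    refine Measurable.ite ?_ (measurable_const.mul (hfm.comp (measurable_pi_apply 0)))
      (measurable_pay hW hfm (k+1))
    exact (measurable_pi_apply 0) hW
  have hg0 : ∀ η, 0 ≤ g η := by
    intro η
    rw [hg]
    dsimp only
    split
    · exact mul_nonneg (hδ0 _) (hf0 _)
    · exact pay_nonneg hδ0 hf0 _ _
  have hgC : ∀ η, g η ≤ C := by
    intro η
    rw [hg]
    dsimp only
    split
    · calc δ (k+1) * f (η 0) ≤ 1 * C :=
          mul_le_mul (hδ1 _) (hfC _) (hf0 _) one_pos.le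
        _ = C := one_mul C
    · refine le_trans (pay_le hδ0 hC hf0 hfC hanti _ _) ?_
      calc C * δ (k+1+1) ≤ C * 1 := mul_le_mul_of_nonneg_left (hδ1 _) hC
        _ = C := mul_one C
  have hpath : ∀ ω : ℕ → 𝕏, pay δ f W k ω = g (fun n => ω (n + 1)) := by
    intro ω
    rw [pay_rec δ f W k ω, hg]
  have h1 : Fk Pr δ f W k x = ∫ y, (∫ η, g η ∂(Pr y)) ∂(Q x) := by
    rw [Fk, integral_congr_ae (ae_of_all _ hpath)]
    exact shiftMarkov_integral Pr Q hchain x g hgm hg0 hgC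
  rw [h1]
  refine integral_congr_ae (ae_of_all _ fun y => ?_)
  have hae : ∀ᵐ η ∂(Pr y), g η = if y ∈ W then δ (k+1) * f y else pay δ f W (k+1) η := by
    filter_upwards [ae_start Pr Q hchain y] with η h0
    rw [hg]
    dsimp only
    rw [h0]
  show (∫ η, g η ∂(Pr y)) = if y ∈ W then δ (k+1) * f y else Fk Pr δ f W (k+1) y
  rw [integral_congr_ae hae]
  by_cases hy : y ∈ W
  · rw [if_pos hy]
    have : (fun η : ℕ → 𝕏 => if y ∈ W then δ (k+1) * f y else pay δ f W (k+1) η)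
        = fun _ => δ (k+1) * f y := by
      funext η; rw [if_pos hy]
    rw [this, integral_const]
    simp
  · rw [if_neg hy]
    have : (fun η : ℕ → 𝕏 => if y ∈ W then δ (k+1) * f y else pay δ f W (k+1) η)
        = pay δ f W (k+1) := by
      funext η; rw [if_neg hy]
    rw [this]
    rfl

include hδ0 hf0 in
lemma Fk_zero (x : 𝕏) : Fk Pr δ f W 0 x = valJ Pr δ f W x := by
  refine integral_congr_ae (ae_of_all _ fun ω => ?_)
  rw [pay_zero, stopPayoff]

include hδ0 hanti hC hδ1 hf0 hfC hfm hW in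
lemma Fk_ge_of_not_mem (hWeq : IsEquilibrium Pr δ f W)
    (hDI : ∀ i j : ℕ, δ i * δ j ≤ δ (i + j)) (k : ℕ) {y : 𝕏} (hy : y ∉ W) :
    δ k * f y ≤ Fk Pr δ f W k y := by
  have h1 : f y ≤ Fk Pr δ f W 0 y := by
    rw [Fk_zero Pr δ f hδ0 hf0 y]
    by_contra hlt
    push_neg at hlt
    have : y ∈ Θ Pr δ f W := hlt.le
    rw [hWeq.2] at this
    exact hy this
  have hint0 : Integrable (pay δ f W 0) (Pr y) :=
    integrable_of_bounds _ (measurable_pay hW hfm 0) (pay_nonneg hδ0 hf0 0)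
      (pay_le hδ0 hC hf0 hfC hanti 0)
  have hintk : Integrable (pay δ f W k) (Pr y) :=
    integrable_of_bounds _ (measurable_pay hW hfm k) (pay_nonneg hδ0 hf0 k)
      (pay_le hδ0 hC hf0 hfC hanti k)
  calc δ k * f y ≤ δ k * Fk Pr δ f W 0 y := mul_le_mul_of_nonneg_left h1 (hδ0 k)
    _ = ∫ ω, δ k * pay δ f W 0 ω ∂(Pr y) := (integral_const_mul _ _).symm
    _ ≤ ∫ ω, pay δ f W k ω ∂(Pr y) :=
        integral_mono (hint0.const_mul _) hintk (pay_DI hδ0 hf0 hDI k)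
    _ = Fk Pr δ f W k y := rfl

end FK

end hitAux

open hitAux in
/-- Under decreasing impatience, for any two equilibria `S, T`,
`J(x, ρ(x, S∩T)) ≥ max (J(x, ρ(x,S))) (J(x, ρ(x,T)))` for all `x`;
in particular `Θ(S∩T) ⊆ S∩T`. -/
theorem intersection_improves
    {𝕏 : Type*} [TopologicalSpace 𝕏] [PolishSpace 𝕏] [MeasurableSpace 𝕏] [BorelSpace 𝕏]
    (Pr : Kernel 𝕏 (ℕ → 𝕏)) [IsMarkovKernel Pr] (Q : Kernel 𝕏 𝕏) [IsMarkovKernel Q]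
    (hchain : IsMarkovChainLaw Pr Q)
    (f : 𝕏 → ℝ) (hf_meas : Measurable f) (hf_nonneg : ∀ x, 0 ≤ f x)
    (hf_bdd : ∃ C : ℝ, ∀ x, f x ≤ C)
    (δ : ℕ → ℝ) (hδ_mem : ∀ k, δ k ∈ Set.Icc (0 : ℝ) 1) (hδ_anti : StrictAnti δ)
    (hδ_zero : δ 0 = 1) (hδ_lim : Tendsto δ atTop (𝓝 0))
    (hDI : ∀ i j : ℕ, δ i * δ j ≤ δ (i + j))
    (S T : Set 𝕏) (hS : IsEquilibrium Pr δ f S) (hT : IsEquilibrium Pr δ f T) :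
    (∀ x : 𝕏, max (valJ Pr δ f S x) (valJ Pr δ f T x) ≤ valJ Pr δ f (S ∩ T) x) ∧
    Θ Pr δ f (S ∩ T) ⊆ S ∩ T := by

  classical
  obtain ⟨C₀, hC₀⟩ := hf_bdd
  set C : ℝ := max C₀ 0 with hCdef
  have hC : 0 ≤ C := le_max_right _ _
  have hfC : ∀ x, f x ≤ C := fun x => le_trans (hC₀ x) (le_max_left _ _)
  have hδ0 : ∀ k, 0 ≤ δ k := fun k => (hδ_mem k).1
  have hδ1 : ∀ k, δ k ≤ 1 := fun k => (hδ_mem k).2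
  have hanti : Antitone δ := hδ_anti.antitone
  have hSm : MeasurableSet S := hS.1
  have hTm : MeasurableSet T := hT.1
  obtain ⟨U, hUdef⟩ : ∃ U : Set 𝕏, U = S ∩ T := ⟨S ∩ T, rfl⟩
  have hSTm : MeasurableSet U := by rw [hUdef]; exact hSm.inter hTm
  have hUmem : ∀ y : 𝕏, y ∈ U ↔ y ∈ S ∧ y ∈ T := fun y => by rw [hUdef]; exact Iff.rfl
  -- uniform bound for the branch functions
  have hbranch : ∀ (W : Set 𝕏), MeasurableSet W → ∀ k : ℕ,
      Measurable (fun y : 𝕏 => if y ∈ W then δ (k+1) * f y else Fk Pr δ f W (k+1) y) ∧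
      (∀ y, 0 ≤ (if y ∈ W then δ (k+1) * f y else Fk Pr δ f W (k+1) y)) ∧
      (∀ y, (if y ∈ W then δ (k+1) * f y else Fk Pr δ f W (k+1) y) ≤ C) := by
    intro W hW k
    refine ⟨Measurable.ite hW (measurable_const.mul hf_meas)
      (measurable_Fk Pr δ f hδ0 hanti hC hδ1 hf_nonneg hfC hf_meas hW (k+1)), ?_, ?_⟩
    · intro y
      split
      · exact mul_nonneg (hδ0 _) (hf_nonneg _)
      · exact Fk_nonneg Pr δ f hδ0 hf_nonneg _ _
    · intro y
      split
      · calc δ (k+1) * f y ≤ 1 * C := mul_le_mul (hδ1 _) (hfC _) (hf_nonneg _) one_pos.le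
          _ = C := one_mul C
      · refine le_trans (Fk_le Pr δ f hδ0 hanti hC hf_nonneg hfC hf_meas hW _ _) ?_
        calc C * δ (k+1+1) ≤ C * 1 := mul_le_mul_of_nonneg_left (hδ1 _) hC
          _ = C := mul_one C
  have hmain : ∀ n k : ℕ, ∀ x : 𝕏,
      Fk Pr δ f S k x - Fk Pr δ f (U) k x ≤ C * δ (k + n + 1) ∧
      Fk Pr δ f T k x - Fk Pr δ f (U) k x ≤ C * δ (k + n + 1) := by
    intro n
    induction n with
    | zero =>
      intro k x
      have h2 := Fk_nonneg Pr δ f (W := U) hδ0 hf_nonneg k x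
      constructor
      · have h1 := Fk_le Pr δ f hδ0 hanti hC hf_nonneg hfC hf_meas hSm k x
        linarith
      · have h1 := Fk_le Pr δ f hδ0 hanti hC hf_nonneg hfC hf_meas hTm k x
        linarith
    | succ n ih =>
      intro k x
      obtain ⟨hmS, h0S, hCS⟩ := hbranch S hSm k
      obtain ⟨hmT, h0T, hCT⟩ := hbranch T hTm k
      obtain ⟨hmST, h0ST, hCST⟩ := hbranch U hSTm k
      have hintS : Integrable (fun y : 𝕏 => if y ∈ S then δ (k+1) * f y
          else Fk Pr δ f S (k+1) y) (Q x) := integrable_of_bounds _ hmS h0S hCS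
      have hintT : Integrable (fun y : 𝕏 => if y ∈ T then δ (k+1) * f y
          else Fk Pr δ f T (k+1) y) (Q x) := integrable_of_bounds _ hmT h0T hCT
      have hintST : Integrable (fun y : 𝕏 => if y ∈ U then δ (k+1) * f y
          else Fk Pr δ f (U) (k+1) y) (Q x) := integrable_of_bounds _ hmST h0ST hCST
      have hrecS := Fk_rec Pr Q δ f hδ0 hanti hC hδ1 hf_nonneg hfC hf_meas hSm hchain k x
      have hrecT := Fk_rec Pr Q δ f hδ0 hanti hC hδ1 hf_nonneg hfC hf_meas hTm hchain k x
      have hrecST := Fk_rec Pr Q δ f hδ0 hanti hC hδ1 hf_nonneg hfC hf_meas hSTm hchain k x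
      have harith : k + 1 + n + 1 = k + (n + 1) + 1 := by omega
      constructor
      · rw [hrecS, hrecST, ← integral_sub hintS hintST]
        have hpt : ∀ y : 𝕏, ((if y ∈ S then δ (k+1) * f y else Fk Pr δ f S (k+1) y)
            - (if y ∈ U then δ (k+1) * f y else Fk Pr δ f (U) (k+1) y))
            ≤ C * δ (k + (n + 1) + 1) := by
          intro y
          by_cases hyS : y ∈ S
          · by_cases hyT : y ∈ T
            · rw [if_pos hyS, if_pos ((hUmem y).mpr ⟨hyS, hyT⟩)]
              have : 0 ≤ C * δ (k + (n+1) + 1) := mul_nonneg hC (hδ0 _)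
              linarith
            · rw [if_pos hyS, if_neg (fun h => hyT ((hUmem y).mp h).2)]
              have hA := Fk_ge_of_not_mem Pr δ f hδ0 hanti hC hδ1 hf_nonneg hfC
                hf_meas hTm hT hDI (k+1) hyT
              have ih2 := (ih (k+1) y).2
              rw [harith] at ih2
              linarith
          · rw [if_neg hyS, if_neg (fun h => hyS ((hUmem y).mp h).1)]
            have ih1 := (ih (k+1) y).1
            rw [harith] at ih1
            linarith
        refine le_trans (integral_mono (hintS.sub hintST) (integrable_const _) hpt) ?_
        rw [integral_const]
        simp
      · rw [hrecT, hrecST, ← integral_sub hintT hintST]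
        have hpt : ∀ y : 𝕏, ((if y ∈ T then δ (k+1) * f y else Fk Pr δ f T (k+1) y)
            - (if y ∈ U then δ (k+1) * f y else Fk Pr δ f (U) (k+1) y))
            ≤ C * δ (k + (n + 1) + 1) := by
          intro y
          by_cases hyT : y ∈ T
          · by_cases hyS : y ∈ S
            · rw [if_pos hyT, if_pos ((hUmem y).mpr ⟨hyS, hyT⟩)]
              have : 0 ≤ C * δ (k + (n+1) + 1) := mul_nonneg hC (hδ0 _)
              linarith
            · rw [if_pos hyT, if_neg (fun h => hyS ((hUmem y).mp h).1)]
              have hA := Fk_ge_of_not_mem Pr δ f hδ0 hanti hC hδ1 hf_nonneg hfC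
                hf_meas hSm hS hDI (k+1) hyS
              have ih1 := (ih (k+1) y).1
              rw [harith] at ih1
              linarith
          · rw [if_neg hyT, if_neg (fun h => hyT ((hUmem y).mp h).2)]
            have ih2 := (ih (k+1) y).2
            rw [harith] at ih2
            linarith
        refine le_trans (integral_mono (hintT.sub hintST) (integrable_const _) hpt) ?_
        rw [integral_const]
        simp
  have hle : ∀ x : 𝕏, Fk Pr δ f S 0 x ≤ Fk Pr δ f (U) 0 x ∧
      Fk Pr δ f T 0 x ≤ Fk Pr δ f (U) 0 x := by
    intro x
    have htend : Tendsto (fun n : ℕ => C * δ (0 + n + 1)) atTop (𝓝 0) := by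
      have h1 : Tendsto (fun n : ℕ => 0 + n + 1) atTop atTop :=
        tendsto_atTop_mono (fun n => by simp only [id_eq]; omega) tendsto_id
      have := (hδ_lim.comp h1).const_mul C
      simpa using this
    constructor
    · have h := ge_of_tendsto' htend (fun n => (hmain n 0 x).1)
      linarith
    · have h := ge_of_tendsto' htend (fun n => (hmain n 0 x).2)
      linarith
  have hpart1 : ∀ x : 𝕏, max (valJ Pr δ f S x) (valJ Pr δ f T x) ≤ valJ Pr δ f (U) x := by
    intro x
    rw [← Fk_zero Pr δ f hδ0 hf_nonneg x, ← Fk_zero Pr δ f hδ0 hf_nonneg x,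
      ← Fk_zero Pr δ f hδ0 hf_nonneg x]
    exact max_le (hle x).1 (hle x).2
  rw [hUdef] at hpart1
  refine ⟨hpart1, fun x hx => ?_⟩
  have hx' : valJ Pr δ f (S ∩ T) x ≤ f x := hx
  constructor
  · rw [← hS.2]
    exact le_trans (le_trans (le_max_left _ _) (hpart1 x)) hx'
  · rw [← hT.2]
    exact le_trans (le_trans (le_max_right _ _) (hpart1 x)) hx'


end
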